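/- arXiv:2401.12641 — 2 statements merged into one kernel-verified Lean document; each statement's English description precedes it below -/
import Mathlib

section
/- A first-order problem f : (ℕ→ℕ) → Set ℕ is discontinuous if and only if ACC_ℕ ≤_W* f. -/
/-- The domain of a first-order problem. -/
def domFO (f : (ℕ → ℕ) → Set ℕ) : Set (ℕ → ℕ) := {p | f p ≠ ∅}

/-- The problem `ACC_ℕ`. -/
def ACCN (p : ℕ → ℕ) : Set ℕ :=
  {n | (∀ i j, p i ≠ 0 → p j ≠ 0 → p i = p j) ∧ ∀ k, p k ≠ n + 1}

/-- Continuity of a first-order problem: it has a choice function continuous on its domain. -/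
def FOContinuous (g : (ℕ → ℕ) → Set ℕ) : Prop :=
  ∃ F : (ℕ → ℕ) → ℕ, ContinuousOn F (domFO g) ∧ ∀ p ∈ domFO g, F p ∈ g p

/-- Continuous Weihrauch reducibility between first-order problems. -/
def RedFOFO (f g : (ℕ → ℕ) → Set ℕ) : Prop :=
  ∃ (H : (ℕ → ℕ) → (ℕ → ℕ)) (K : (ℕ → ℕ) × ℕ → ℕ),
    ContinuousOn H (domFO f) ∧
    ContinuousOn K {pn : (ℕ → ℕ) × ℕ | pn.1 ∈ domFO f ∧ pn.2 ∈ g (H pn.1)} ∧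
    (∀ p ∈ domFO f, H p ∈ domFO g) ∧
    (∀ p ∈ domFO f, ∀ n ∈ g (H p), K (p, n) ∈ f p)

attribute [local instance] Classical.propDecidable

lemma cyl_open (t : ℕ) (x : ℕ → ℕ) : IsOpen {q : ℕ → ℕ | ∀ i < t, q i = x i} := by
  have : {q : ℕ → ℕ | ∀ i < t, q i = x i} =
      Set.pi (↑(Finset.range t) : Set ℕ) (fun i => {x i}) := by
    ext q; simp [Set.mem_pi]
  rw [this]
  exact isOpen_set_pi (Finset.range t).finite_toSet (fun i _ => isOpen_discrete _)

lemma ca_of_const {X Y : Type*} [TopologicalSpace X] [TopologicalSpace Y]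
    {F : X → Y} {U : Set X} {x : X}
    (hU : IsOpen U) (hx : x ∈ U) (hc : ∀ y ∈ U, F y = F x) : ContinuousAt F x := by
  have h : F =ᶠ[nhds x] fun _ => F x := Filter.eventually_of_mem (hU.mem_nhds hx) hc
  exact Filter.Tendsto.congr' h.symm tendsto_const_nhds

lemma cwa_of_const {X Y : Type*} [TopologicalSpace X] [TopologicalSpace Y]
    {F : X → Y} {s U : Set X} {x : X}
    (hU : IsOpen U) (hx : x ∈ U) (hc : ∀ y ∈ U, F y = F x) : ContinuousWithinAt F s x :=
  (ca_of_const hU hx hc).continuousWithinAt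

lemma mem_domFO_ACCN {p : ℕ → ℕ} :
    p ∈ domFO ACCN ↔ ∀ i j, p i ≠ 0 → p j ≠ 0 → p i = p j := by
  constructor
  · intro hp
    rcases Set.nonempty_iff_ne_empty.2 hp with ⟨n, hn⟩
    exact hn.1
  · intro hp
    apply Set.nonempty_iff_ne_empty.1
    by_cases h : ∃ k, p k ≠ 0
    · rcases h with ⟨k, hk⟩
      refine ⟨p k, hp, fun j => ?_⟩
      by_cases hj : p j = 0
      · omega
      · have := hp j k hj hk; omega
    · push_neg at h
      exact ⟨0, hp, fun k => by rw [h k]; omega⟩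

/-- `good f t x` : some answer `n` works uniformly on the cylinder of `x` of length `t`. -/
def good (f : (ℕ → ℕ) → Set ℕ) (t : ℕ) (x : ℕ → ℕ) : Prop :=
  ∃ n, ∀ q ∈ domFO f, (∀ i < t, q i = x i) → n ∈ f q

lemma good_congr {f : (ℕ → ℕ) → Set ℕ} {t : ℕ} {x y : ℕ → ℕ}
    (h : ∀ i < t, x i = y i) (hx : good f t x) : good f t y := by
  rcases hx with ⟨n, hn⟩
  exact ⟨n, fun q hq hqy => hn q hq fun i hi => (hqy i hi).trans (h i hi).symm⟩

def trunc (t : ℕ) (x : ℕ → ℕ) : ℕ → ℕ := fun i => if i < t then x i else 0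

lemma trunc_congr {t : ℕ} {x y : ℕ → ℕ} (h : ∀ i < t, x i = y i) :
    trunc t x = trunc t y := by
  funext i; unfold trunc; split
  · exact h i ‹_›
  · rfl

noncomputable def glueSel (f : (ℕ → ℕ) → Set ℕ) (t : ℕ) (v : ℕ → ℕ) : ℕ :=
  if h : good f t v then h.choose else 0

noncomputable def glueF (f : (ℕ → ℕ) → Set ℕ) (x : ℕ → ℕ) : ℕ :=
  if h : ∃ t, good f t x then glueSel f (Nat.find h) (trunc (Nat.find h) x) else 0

lemma trunc_prefix (t : ℕ) (x : ℕ → ℕ) : ∀ i < t, x i = trunc t x i := by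
  intro i hi; simp [trunc, hi]

lemma glueF_mem {f : (ℕ → ℕ) → Set ℕ} {x : ℕ → ℕ} (hx : x ∈ domFO f)
    (h : ∃ t, good f t x) : glueF f x ∈ f x := by
  rw [glueF, dif_pos h]
  set m := Nat.find h with hm
  have hg : good f m (trunc m x) := good_congr (trunc_prefix m x) (Nat.find_spec h)
  rw [glueSel, dif_pos hg]
  exact hg.choose_spec x hx (fun i hi => trunc_prefix m x i hi)

lemma glueF_local {f : (ℕ → ℕ) → Set ℕ} {x y : ℕ → ℕ}
    (h : ∃ t, good f t x) (hfor : ∀ i < Nat.find h, y i = x i) :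
    glueF f y = glueF f x := by
  set m := Nat.find h with hm
  have hgy : good f m y := good_congr (fun i hi => (hfor i hi).symm) (Nat.find_spec h)
  have hy : ∃ t, good f t y := ⟨m, hgy⟩
  have hfind : Nat.find hy = m := by
    have hle : Nat.find hy ≤ m := Nat.find_min' hy hgy
    rcases lt_or_eq_of_le hle with hlt | heq
    · exfalso
      have hgx : good f (Nat.find hy) x :=
        good_congr (fun i hi => hfor i (hi.trans hlt)) (Nat.find_spec hy)
      exact Nat.find_min h hlt hgx
    · exact heq
  rw [glueF, dif_pos hy, glueF, dif_pos h, hfind]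
  rw [trunc_congr hfor]

/-- The gluing lemma: pointwise local solvability gives a continuous choice function. -/
lemma glue {f : (ℕ → ℕ) → Set ℕ}
    (h : ∀ p ∈ domFO f, ∃ n t, ∀ q ∈ domFO f, (∀ i < t, q i = p i) → n ∈ f q) :
    FOContinuous f := by
  refine ⟨glueF f, ?_, ?_⟩
  · intro x hx
    have hex : ∃ t, good f t x := by
      rcases h x hx with ⟨n, t, hnt⟩; exact ⟨t, n, hnt⟩
    exact cwa_of_const (cyl_open (Nat.find hex) x) (fun i _ => rfl)
      (fun y hy => glueF_local hex hy)
  · intro x hx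
    have hex : ∃ t, good f t x := by
      rcases h x hx with ⟨n, t, hnt⟩; exact ⟨t, n, hnt⟩
    exact glueF_mem hx hex

/-- ACC_ℕ is discontinuous. -/
lemma accn_discont : ¬ FOContinuous ACCN := by
  rintro ⟨F, hF, hsol⟩
  have h0 : (fun _ => 0 : ℕ → ℕ) ∈ domFO ACCN :=
    mem_domFO_ACCN.2 (fun i j hi _ => absurd rfl hi)
  set n₀ := F (fun _ => 0) with hn₀
  set q : ℕ → (ℕ → ℕ) := fun m i => if i = m then n₀ + 1 else 0 with hqdef
  have hq : ∀ m, q m ∈ domFO ACCN := by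
    intro m
    refine mem_domFO_ACCN.2 (fun i j hi hj => ?_)
    have hi' : i = m := by by_contra h; simp [hqdef, h] at hi
    have hj' : j = m := by by_contra h; simp [hqdef, h] at hj
    rw [hi', hj']
  have htt : Filter.Tendsto q Filter.atTop
      (nhdsWithin (fun _ => 0) (domFO ACCN)) := by
    rw [tendsto_nhdsWithin_iff]
    constructor
    · rw [tendsto_pi_nhds]
      intro i
      apply Filter.Tendsto.congr' (f₁ := fun _ => (0 : ℕ))
      · filter_upwards [Filter.eventually_gt_atTop i] with m hm
        have hne : i ≠ m := by omega
        simp [hqdef, hne]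
      · exact tendsto_const_nhds
    · exact Filter.Eventually.of_forall hq
  have h2 : Filter.Tendsto (fun m => F (q m)) Filter.atTop (nhds n₀) :=
    (hF _ h0).tendsto.comp htt
  have h3 : ∀ᶠ m in Filter.atTop, F (q m) = n₀ :=
    h2 (IsOpen.mem_nhds (isOpen_discrete {n₀}) rfl)
  obtain ⟨m, hm⟩ := h3.exists
  have := (hsol (q m) (hq m)).2 m
  simp [hqdef, hm] at this
  exact this hm.symm

/-- Reduction transfers continuity backwards. -/
lemma red_cont {f g : (ℕ → ℕ) → Set ℕ} (hr : RedFOFO f g) (hg : FOContinuous g) :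
    FOContinuous f := by
  obtain ⟨H, K, hH, hK, hdom, hsol⟩ := hr
  obtain ⟨G, hG, hGsol⟩ := hg
  refine ⟨fun p => K (p, G (H p)), ?_, ?_⟩
  · have h1 : ContinuousOn (G ∘ H) (domFO f) := hG.comp hH (fun p hp => hdom p hp)
    have h2 : ContinuousOn (fun p => (p, G (H p))) (domFO f) := continuousOn_id.prodMk h1
    exact hK.comp h2 (fun p hp => ⟨hp, hGsol (H p) (hdom p hp)⟩)
  · intro p hp
    exact hsol p hp _ (hGsol (H p) (hdom p hp))

noncomputable def Hred (ps : ℕ → ℕ) (Q : ℕ → ℕ → (ℕ → ℕ)) (p : ℕ → ℕ) : ℕ → ℕ :=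
  if h : ∃ j, p j ≠ 0 then Q (p (Nat.find h) - 1) (Nat.find h) else ps

lemma Hred_cont {ps : ℕ → ℕ} {Q : ℕ → ℕ → (ℕ → ℕ)}
    (hQpre : ∀ n t, ∀ i < t, Q n t i = ps i) : Continuous (Hred ps Q) := by
  rw [continuous_iff_continuousAt]
  intro p
  by_cases h : ∃ j, p j ≠ 0
  · set j := Nat.find h with hj
    apply ca_of_const (cyl_open (j + 1) p) (fun i _ => rfl)
    intro y hy
    have hyj : y j ≠ 0 := by rw [hy j (Nat.lt_succ_self j)]; exact Nat.find_spec h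
    have hy' : ∃ j, y j ≠ 0 := ⟨j, hyj⟩
    have hfind : Nat.find hy' = j := by
      refine le_antisymm (Nat.find_min' hy' hyj) ?_
      by_contra hlt
      push_neg at hlt
      have h1 : y (Nat.find hy') = p (Nat.find hy') :=
        hy _ (lt_trans hlt (Nat.lt_succ_self j))
      have h2 : p (Nat.find hy') = 0 := by
        by_contra h2
        exact Nat.find_min h hlt h2
      exact Nat.find_spec hy' (h1.trans h2)
    rw [Hred, dif_pos hy', Hred, dif_pos h, hfind, ← hj, hy j (Nat.lt_succ_self j)]
  · rw [continuousAt_pi]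
    intro i
    apply ca_of_const (U := {y : ℕ → ℕ | ∀ k < i + 1, y k = p k}) (cyl_open (i + 1) p)
      (fun k _ => rfl)
    intro y hy
    push_neg at h
    have hHp : Hred ps Q p i = ps i := by rw [Hred, dif_neg (by push_neg; exact h)]
    rw [hHp]
    by_cases hy' : ∃ j, y j ≠ 0
    · have hfind : i < Nat.find hy' := by
        by_contra hle
        push_neg at hle
        have := hy (Nat.find hy') (by omega)
        exact Nat.find_spec hy' (this.trans (h _))
      rw [Hred, dif_pos hy']
      exact hQpre _ _ i hfind
    · rw [Hred, dif_neg hy']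

lemma Hred_spec {ps : ℕ → ℕ} {Q : ℕ → ℕ → (ℕ → ℕ)} {p : ℕ → ℕ}
    (h : ∃ j, p j ≠ 0) : ∃ J, p J ≠ 0 ∧ Hred ps Q p = Q (p J - 1) J := by
  refine ⟨Nat.find h, Nat.find_spec h, ?_⟩
  rw [Hred, dif_pos h]

lemma red_construction {f : (ℕ → ℕ) → Set ℕ} (ps : ℕ → ℕ) (hps : ps ∈ domFO f)
    (Q : ℕ → ℕ → (ℕ → ℕ)) (hQdom : ∀ n t, Q n t ∈ domFO f)
    (hQpre : ∀ n t, ∀ i < t, Q n t i = ps i) (hQbad : ∀ n t, n ∉ f (Q n t)) :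
    RedFOFO ACCN f := by
  refine ⟨Hred ps Q, fun pn => pn.2, (Hred_cont hQpre).continuousOn,
    continuous_snd.continuousOn, ?_, ?_⟩
  · intro p _
    rw [Hred]
    split
    · exact hQdom _ _
    · exact hps
  · intro p hp m hm
    show m ∈ ACCN p
    refine ⟨mem_domFO_ACCN.1 hp, fun k => ?_⟩
    by_cases hk : p k = 0
    · omega
    · obtain ⟨J, hJ0, hJeq⟩ := Hred_spec (ps := ps) (Q := Q) ⟨k, hk⟩
      rw [hJeq] at hm
      have hval : p k = p J := mem_domFO_ACCN.1 hp k J hk hJ0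
      have hmne : m ≠ p J - 1 := fun heq => hQbad _ _ (heq ▸ hm)
      omega

theorem first_order_discontinuous_iff_accn (f : (ℕ → ℕ) → Set ℕ) :
    ¬ FOContinuous f ↔ RedFOFO ACCN f := by
  constructor
  · intro hnc
    have hkey : ¬ ∀ p ∈ domFO f, ∃ n t, ∀ q ∈ domFO f, (∀ i < t, q i = p i) → n ∈ f q :=
      fun h => hnc (glue h)
    push_neg at hkey
    obtain ⟨ps, hps, hP⟩ := hkey
    choose Q hQdom hQpre hQbad using hP
    exact red_construction ps hps Q hQdom hQpre hQbad
  · intro hr hc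
    exact accn_discont (red_cont hr hc)
end

section
/- For every first-order problem f : (ℕ→ℕ) → Set ℕ, the Wadge game for f is determined: either Player II has a winning strategy or Player I has a winning strategy. -/
open scoped Classical

/-- The histories `([x 0, …, x (k-1)], [y 0, …, y (k-1)])` after `k` rounds of the
play of Player I's strategy `σ` against Player II's strategy `τ` in the Wadge game. -/
def hist (σ : List (Option ℕ) → ℕ) (τ : List ℕ → Option ℕ) :
    ℕ → List ℕ × List (Option ℕ)
  | 0 => ([], [])
  | k + 1 =>
    let h := hist σ τ k
    let xk := σ h.2
    (h.1 ++ [xk], h.2 ++ [τ (h.1 ++ [xk])])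

/-- Player I's moves in the play of `σ` against `τ`. -/
def playX (σ : List (Option ℕ) → ℕ) (τ : List ℕ → Option ℕ) (k : ℕ) : ℕ :=
  σ (hist σ τ k).2

/-- Player II's moves in the play of `σ` against `τ`. -/
def playY (σ : List (Option ℕ) → ℕ) (τ : List ℕ → Option ℕ) (k : ℕ) : Option ℕ :=
  τ ((hist σ τ k).1 ++ [playX σ τ k])

/-- Player II wins the play of `σ` against `τ` in the Wadge game for `f`. -/
def IIWins (f : (ℕ → ℕ) → Set ℕ) (σ : List (Option ℕ) → ℕ)
    (τ : List ℕ → Option ℕ) : Prop :=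
  playX σ τ ∉ domFO f ∨
    ({k | playY σ τ k ≠ none}.Infinite ∧
      ∃ k n, playY σ τ k = some n ∧ (∀ j < k, playY σ τ j = none) ∧
        n ∈ f (playX σ τ))

/-! ### Auxiliary machinery -/

/-- Extend a finite sequence `s` by an infinite tail `u`. -/
def ext (s : List ℕ) (u : ℕ → ℕ) : ℕ → ℕ := fun i =>
  if i < s.length then s.getD i 0 else u (i - s.length)

/-- Committing `n` after seeing `s` is safe for Player II: whatever the
continuation, II wins. -/
def Bad (f : (ℕ → ℕ) → Set ℕ) (s : List ℕ) (n : ℕ) : Prop :=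
  ∀ u : ℕ → ℕ, ext s u ∉ domFO f ∨ n ∈ f (ext s u)

/-- `s` is a safe position for Player II. -/
def Safe (f : (ℕ → ℕ) → Set ℕ) (s : List ℕ) : Prop := ∃ n, Bad f s n

/-- Player II's strategy: stay silent until the first safe prefix, then
(forever) play the witness of the first safe prefix. -/
noncomputable def tauFor (f : (ℕ → ℕ) → Set ℕ) : List ℕ → Option ℕ := fun s =>
  if h : ∃ j, j < s.length ∧ Safe f (s.take (j + 1)) then
    some ((Nat.find_spec h).2.choose)
  else none

/-- Player I's strategy given a silent line `a` and continuations `U`. -/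
noncomputable def sigmaFor (a : ℕ → ℕ) (U : ℕ → ℕ → ℕ → ℕ) :
    List (Option ℕ) → ℕ := fun h =>
  if hh : ∃ j, j < h.length ∧ h.getD j none ≠ none then
    U (Nat.find hh) ((h.getD (Nat.find hh) none).getD 0) (h.length - (Nat.find hh + 1))
  else a h.length

lemma getD_map_range {α} (g : ℕ → α) (d : α) {j k : ℕ} (h : j < k) :
    ((List.range k).map g).getD j d = g j := by
  simp [List.getD, h]

lemma take_map_range {α} (g : ℕ → α) (m k : ℕ) :
    ((List.range k).map g).take m = (List.range (min m k)).map g := by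
  rw [← List.map_take, List.take_range]

lemma hist_eq (σ : List (Option ℕ) → ℕ) (τ : List ℕ → Option ℕ) (k : ℕ) :
    hist σ τ k = ((List.range k).map (playX σ τ), (List.range k).map (playY σ τ)) := by
  induction k with
  | zero => simp [hist]
  | succ k ih =>
    have hx : σ ((List.range k).map (playY σ τ)) = playX σ τ k := by
      rw [playX, ih]
    have hy : τ ((List.range k).map (playX σ τ) ++ [playX σ τ k]) = playY σ τ k := by
      rw [playY, ih]
    have hrec : hist σ τ (k + 1) =
        ((hist σ τ k).1 ++ [σ (hist σ τ k).2],
         (hist σ τ k).2 ++ [τ ((hist σ τ k).1 ++ [σ (hist σ τ k).2])]) := rfl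
    have e1 : (List.range (k + 1)).map (playX σ τ) =
        (List.range k).map (playX σ τ) ++ [playX σ τ k] := by simp [List.range_succ]
    have e2 : (List.range (k + 1)).map (playY σ τ) =
        (List.range k).map (playY σ τ) ++ [playY σ τ k] := by simp [List.range_succ]
    rw [hrec, ih, e1, e2]
    simp only [hx, hy]

lemma playX_eq (σ : List (Option ℕ) → ℕ) (τ : List ℕ → Option ℕ) (k : ℕ) :
    playX σ τ k = σ ((List.range k).map (playY σ τ)) := by
  rw [playX, hist_eq]

lemma playY_eq (σ : List (Option ℕ) → ℕ) (τ : List ℕ → Option ℕ) (k : ℕ) :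
    playY σ τ k = τ ((List.range (k + 1)).map (playX σ τ)) := by
  rw [playY, hist_eq, List.range_succ, List.map_append]
  rfl

lemma ext_pre (x : ℕ → ℕ) (m : ℕ) :
    ext ((List.range m).map x) (fun i => x (m + i)) = x := by
  funext i
  rw [ext]
  simp only [List.length_map, List.length_range]
  split
  · exact getD_map_range x 0 (by omega)
  · congr 1; omega

lemma choose_congr_safe (f : (ℕ → ℕ) → Set ℕ) {t t' : List ℕ} (h : t = t')
    (p : Safe f t) (p' : Safe f t') : p.choose = p'.choose := by
  subst h; rfl

theorem wadge_game_determined (f : (ℕ → ℕ) → Set ℕ) :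
    (∃ τ : List ℕ → Option ℕ, ∀ σ : List (Option ℕ) → ℕ, IIWins f σ τ) ∨
    (∃ σ : List (Option ℕ) → ℕ, ∀ τ : List ℕ → Option ℕ, ¬ IIWins f σ τ) := by
  by_cases H : ∀ x : ℕ → ℕ, x ∈ domFO f → ∃ k, Safe f ((List.range (k + 1)).map x)
  · -- Player II wins
    left
    refine ⟨tauFor f, fun σ => ?_⟩
    set x := playX σ (tauFor f) with hxdef
    have hy : ∀ k, playY σ (tauFor f) k = tauFor f ((List.range (k + 1)).map x) :=
      fun k => playY_eq σ (tauFor f) k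
    by_cases hx : ∃ k, Safe f ((List.range (k + 1)).map x)
    · set k0 := Nat.find hx with hk0
      have hsafe : Safe f ((List.range (k0 + 1)).map x) := Nat.find_spec hx
      set n0 := hsafe.choose with hn0
      have hBad : Bad f ((List.range (k0 + 1)).map x) n0 := hsafe.choose_spec
      -- compute the condition inside tauFor at stage k
      have hcond : ∀ k, (∃ j, j < ((List.range (k + 1)).map x).length ∧
          Safe f (((List.range (k + 1)).map x).take (j + 1))) ↔
          (∃ j, j < k + 1 ∧ Safe f ((List.range (j + 1)).map x)) := by
        intro k
        constructor
        · rintro ⟨j, hj, hs⟩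
          simp only [List.length_map, List.length_range] at hj
          rw [take_map_range, min_eq_left (by omega)] at hs
          exact ⟨j, hj, hs⟩
        · rintro ⟨j, hj, hs⟩
          refine ⟨j, by simpa using hj, ?_⟩
          rw [take_map_range, min_eq_left (by omega)]
          exact hs
      have hynone : ∀ k, k < k0 → playY σ (tauFor f) k = none := by
        intro k hk
        rw [hy, tauFor, dif_neg]
        rw [hcond k]
        rintro ⟨j, hj, hs⟩
        exact Nat.find_min hx (m := j) (by omega) hs
      have hysome : ∀ k, k0 ≤ k → playY σ (tauFor f) k ≠ none := by
        intro k hk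
        have hc : ∃ j, j < ((List.range (k + 1)).map x).length ∧
            Safe f (((List.range (k + 1)).map x).take (j + 1)) :=
          (hcond k).2 ⟨k0, by omega, hsafe⟩
        rw [hy, tauFor, dif_pos hc]
        simp
      have hyk0 : playY σ (tauFor f) k0 = some n0 := by
        have hc : ∃ j, j < ((List.range (k0 + 1)).map x).length ∧
            Safe f (((List.range (k0 + 1)).map x).take (j + 1)) :=
          (hcond k0).2 ⟨k0, by omega, hsafe⟩
        rw [hy, tauFor, dif_pos hc]
        have hfind : Nat.find hc = k0 := by
          rw [Nat.find_eq_iff]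
          refine ⟨⟨by simp, by rw [take_map_range, min_eq_left (by omega)]; exact hsafe⟩, ?_⟩
          rintro j hj ⟨hj', hs⟩
          have hj'' : j < k0 + 1 := by simpa using hj'
          rw [take_map_range, min_eq_left (by omega)] at hs
          exact Nat.find_min hx (m := j) hj hs
        congr 1
        refine choose_congr_safe f ?_ _ _
        rw [hfind, take_map_range, min_eq_left (by simp)]
      have hx_or : x ∉ domFO f ∨ n0 ∈ f x := by
        have := hBad (fun i => x (k0 + 1 + i))
        rwa [ext_pre x (k0 + 1)] at this
      rcases hx_or with h | h
      · exact Or.inl h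
      · refine Or.inr ⟨?_, k0, n0, hyk0, fun j hj => hynone j hj, h⟩
        exact Set.infinite_of_injective_forall_mem
          (f := fun i : ℕ => k0 + i)
          (fun i j hij => by simpa using hij)
          (fun i => hysome (k0 + i) (Nat.le_add_right _ _))
    · -- no safe prefix: x cannot be in the domain
      left
      intro hdom
      exact hx (H x hdom)
  · -- Player I wins
    right
    push_neg at H
    obtain ⟨a, ha, hns⟩ := H
    have hU : ∀ k n, ∃ u : ℕ → ℕ,
        ext ((List.range (k + 1)).map a) u ∈ domFO f ∧
        n ∉ f (ext ((List.range (k + 1)).map a) u) := by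
      intro k n
      have h1 := hns k
      rw [Safe] at h1
      push_neg at h1
      have h2 := h1 n
      rw [Bad] at h2
      push_neg at h2
      obtain ⟨u, hu⟩ := h2
      exact ⟨u, hu.1, hu.2⟩
    set U : ℕ → ℕ → ℕ → ℕ := fun k n => (hU k n).choose with hUdef
    refine ⟨sigmaFor a U, fun τ hw => ?_⟩
    set y := playY (sigmaFor a U) τ with hydef
    have hxe : ∀ k, playX (sigmaFor a U) τ k = sigmaFor a U ((List.range k).map y) :=
      fun k => playX_eq _ _ k
    have hcond : ∀ k, (∃ j, j < ((List.range k).map y).length ∧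
        ((List.range k).map y).getD j none ≠ none) ↔ (∃ j, j < k ∧ y j ≠ none) := by
      intro k
      constructor
      · rintro ⟨j, hj, hs⟩
        simp only [List.length_map, List.length_range] at hj
        rw [getD_map_range _ _ hj] at hs
        exact ⟨j, hj, hs⟩
      · rintro ⟨j, hj, hs⟩
        refine ⟨j, by simpa using hj, ?_⟩
        rw [getD_map_range _ _ hj]
        exact hs
    by_cases hy : ∃ k, y k ≠ none
    · set k0 := Nat.find hy with hk0
      have hk0some : y k0 ≠ none := Nat.find_spec hy
      have hk0min : ∀ j, j < k0 → y j = none := fun j hj =>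
        not_not.mp (Nat.find_min hy hj)
      obtain ⟨n0, hn0⟩ : ∃ n, y k0 = some n := Option.ne_none_iff_exists'.mp hk0some
      have hxa : ∀ k, k ≤ k0 → playX (sigmaFor a U) τ k = a k := by
        intro k hk
        rw [hxe, sigmaFor, dif_neg]
        · simp
        · rw [hcond k]
          rintro ⟨j, hj, hs⟩
          exact hs (hk0min j (by omega))
      have hxu : ∀ k, k0 < k →
          playX (sigmaFor a U) τ k = U k0 n0 (k - (k0 + 1)) := by
        intro k hk
        have hc : ∃ j, j < ((List.range k).map y).length ∧
            ((List.range k).map y).getD j none ≠ none :=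
          (hcond k).2 ⟨k0, hk, hk0some⟩
        rw [hxe, sigmaFor, dif_pos hc]
        have hfind : Nat.find hc = k0 := by
          rw [Nat.find_eq_iff]
          refine ⟨⟨by simpa using hk, by rw [getD_map_range _ _ hk]; exact hk0some⟩, ?_⟩
          rintro j hj ⟨hj', hs⟩
          have hj'' : j < k := by simpa using hj'
          rw [getD_map_range _ _ hj''] at hs
          exact hs (hk0min j hj)
        rw [hfind, getD_map_range _ _ hk, hn0]
        simp
      have hxeq : playX (sigmaFor a U) τ = ext ((List.range (k0 + 1)).map a) (U k0 n0) := by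
        funext i
        rw [ext]
        simp only [List.length_map, List.length_range]
        split
        · rename_i hi
          rw [hxa i (by omega), getD_map_range _ _ hi]
        · rename_i hi
          rw [hxu i (by omega)]
      have hspec : ext ((List.range (k0 + 1)).map a) (U k0 n0) ∈ domFO f ∧
          n0 ∉ f (ext ((List.range (k0 + 1)).map a) (U k0 n0)) :=
        (hU k0 n0).choose_spec
      rcases hw with hw | ⟨_, k, n, hk, hfirst, hmem⟩
      · rw [hxeq] at hw
        exact hw hspec.1
      · rw [← hydef] at hk hfirst
        have hkk0 : k = k0 := by
            rcases Nat.lt_trichotomy k k0 with h | h | h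
            · rw [hk0min k h] at hk; exact nomatch hk
            · exact h
            · exact absurd (hfirst k0 h) hk0some
        subst hkk0
        rw [hn0] at hk
        injection hk with hnn
        rw [hxeq] at hmem
        exact hspec.2 (hnn ▸ hmem)
    · push_neg at hy
      have hxa : ∀ k, playX (sigmaFor a U) τ k = a k := by
        intro k
        rw [hxe, sigmaFor, dif_neg]
        · simp
        · rw [hcond k]
          rintro ⟨j, _, hs⟩
          exact hs (hy j)
      have hxeq : playX (sigmaFor a U) τ = a := funext hxa
      rcases hw with hw | ⟨_, k, n, hk, _, _⟩
      · rw [hxeq] at hw; exact hw ha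
      · rw [← hydef, hy k] at hk; exact nomatch hk
end
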